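/- For all natural numbers a, b, c: the sum over w ≥ 0 of C(c+w, a+b)·C(a,w)·C(b,w) equals C(c,a)·C(c,b). -/

import Mathlib

open Finset

/-- Vandermonde's identity, range form. -/
private lemma vand (m n k : ℕ) :
    (m + n).choose k = ∑ i ∈ Finset.range (k + 1), m.choose i * n.choose (k - i) := by
  rw [Nat.add_choose_eq, Finset.Nat.sum_antidiagonal_eq_sum_range_succ_mk]

/-- Second Vandermonde step: `∑_u C(a, j+u) C(m, u) = C(m+a, a-j)` for `j ≤ a`. -/
private lemma vand2 (a m j : ℕ) (hja : j ≤ a) :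
    ∑ u ∈ Finset.range (m + 1), a.choose (j + u) * m.choose u
      = (m + a).choose (a - j) := by
  have hR : (m + a).choose (a - j)
      = ∑ i ∈ Finset.range (a - j + 1), m.choose i * a.choose (a - j - i) := vand m a (a - j)
  have hbig : ∑ u ∈ Finset.range (m + 1), a.choose (j + u) * m.choose u
      = ∑ u ∈ Finset.range (m + a + 1), a.choose (j + u) * m.choose u := by
    apply Finset.sum_subset
    · exact Finset.range_subset_range.2 (by omega)
    · intro u hu hu2
      have : m < u := by
        simp only [Finset.mem_range] at hu hu2; omega
      simp [Nat.choose_eq_zero_of_lt this]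
  have hbig2 : ∑ u ∈ Finset.range (a - j + 1), a.choose (j + u) * m.choose u
      = ∑ u ∈ Finset.range (m + a + 1), a.choose (j + u) * m.choose u := by
    apply Finset.sum_subset
    · exact Finset.range_subset_range.2 (by omega)
    · intro u hu hu2
      have : a < j + u := by
        simp only [Finset.mem_range] at hu hu2; omega
      simp [Nat.choose_eq_zero_of_lt this]
  rw [hbig, ← hbig2, hR]
  apply Finset.sum_congr rfl
  intro u hu
  have hu' : u ≤ a - j := by simpa [Nat.lt_succ_iff] using hu
  have h1 : a - j - u = a - (j + u) := by omega
  have h2 : j + u ≤ a := by omega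
  rw [h1, ← Nat.choose_symm h2]
  ring

/-- Inner sum evaluation for `j ≤ a`, `j ≤ b`. -/
private lemma inner_eq (a b j : ℕ) (hja : j ≤ a) (hjb : j ≤ b) :
    ∑ w ∈ Finset.range (b + 1), w.choose j * (a.choose w * b.choose w)
      = b.choose j * (a + b - j).choose (a - j) := by
  have h1 : ∑ w ∈ Finset.range (b + 1), w.choose j * (a.choose w * b.choose w)
      = ∑ w ∈ Finset.Ico j (b + 1), w.choose j * (a.choose w * b.choose w) := by
    rw [Finset.range_eq_Ico]
    symm
    apply Finset.sum_subset (Finset.Ico_subset_Ico (Nat.zero_le _) le_rfl)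
    intro w hw hw2
    have : w < j := by
      simp only [Finset.mem_Ico] at hw hw2; omega
    simp [Nat.choose_eq_zero_of_lt this]
  rw [h1, Finset.sum_Ico_eq_sum_range]
  have h2 : b + 1 - j = (b - j) + 1 := by omega
  rw [h2]
  have h3 : ∀ u ∈ Finset.range (b - j + 1),
      (j + u).choose j * (a.choose (j + u) * b.choose (j + u))
        = b.choose j * (a.choose (j + u) * (b - j).choose u) := by
    intro u hu
    have hu' : u ≤ b - j := by simpa [Nat.lt_succ_iff] using hu
    have hkb : j + u ≤ b := by omega
    have hmul : b.choose (j + u) * (j + u).choose j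
        = b.choose j * (b - j).choose u := by
      have := Nat.choose_mul (n := b) (Nat.le_add_right j u)
      simpa using this
    calc (j + u).choose j * (a.choose (j + u) * b.choose (j + u))
        = (b.choose (j + u) * (j + u).choose j) * a.choose (j + u) := by ring
      _ = (b.choose j * (b - j).choose u) * a.choose (j + u) := by rw [hmul]
      _ = b.choose j * (a.choose (j + u) * (b - j).choose u) := by ring
  rw [Finset.sum_congr rfl h3, ← Finset.mul_sum, vand2 a (b - j) j hja]
  congr 2
  omega

/-- The right-hand side equals the middle sum `M`. -/
private lemma rhs_eq (a b c : ℕ) :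
    c.choose a * c.choose b
      = ∑ k ∈ Finset.range (a + b + 1), c.choose k * (k.choose b * b.choose (a + b - k)) := by
  rcases lt_or_ge c b with hcb | hbc
  · rw [Nat.choose_eq_zero_of_lt hcb, Nat.mul_zero]
    symm
    apply Finset.sum_eq_zero
    intro k _
    rcases le_or_gt k c with hkc | hck
    · have : k < b := by omega
      simp [Nat.choose_eq_zero_of_lt this]
    · simp [Nat.choose_eq_zero_of_lt hck]
  · -- b ≤ c
    have hc : c = (c - b) + b := by omega
    have hva : c.choose a = ∑ v ∈ Finset.range (a + 1), (c - b).choose v * b.choose (a - v) := by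
      conv_lhs => rw [hc]
      exact vand (c - b) b a
    have hstep : c.choose a * c.choose b
        = ∑ v ∈ Finset.range (a + 1), c.choose (b + v) * ((b + v).choose b * b.choose (a - v)) := by
      rw [hva, Finset.sum_mul]
      apply Finset.sum_congr rfl
      intro v _
      rcases le_or_gt (b + v) c with hbvc | hcbv
      · have hmul : c.choose (b + v) * (b + v).choose b
            = c.choose b * (c - b).choose v := by
          have := Nat.choose_mul (n := c) (Nat.le_add_right b v)
          simpa using this
        calc (c - b).choose v * b.choose (a - v) * c.choose b
            = (c.choose b * (c - b).choose v) * b.choose (a - v) := by ring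
          _ = (c.choose (b + v) * (b + v).choose b) * b.choose (a - v) := by rw [hmul]
          _ = c.choose (b + v) * ((b + v).choose b * b.choose (a - v)) := by ring
      · have h1 : c - b < v := by omega
        rw [Nat.choose_eq_zero_of_lt h1, Nat.choose_eq_zero_of_lt hcbv]
        ring
    rw [hstep]
    have hdrop : ∑ k ∈ Finset.range (a + b + 1), c.choose k * (k.choose b * b.choose (a + b - k))
        = ∑ k ∈ Finset.Ico b (a + b + 1), c.choose k * (k.choose b * b.choose (a + b - k)) := by
      rw [Finset.range_eq_Ico]
      symm
      apply Finset.sum_subset (Finset.Ico_subset_Ico (Nat.zero_le _) le_rfl)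
      intro k hk hk2
      have : k < b := by
        simp only [Finset.mem_Ico] at hk hk2; omega
      simp [Nat.choose_eq_zero_of_lt this]
    rw [hdrop, Finset.sum_Ico_eq_sum_range]
    have h2 : a + b + 1 - b = a + 1 := by omega
    rw [h2]
    apply Finset.sum_congr rfl
    intro v _
    have h3 : a + b - (b + v) = a - v := by omega
    rw [h3]

theorem stmt0 (a b c : ℕ) :
    ∑ w ∈ Finset.range (min a b + 1),
      (c + w).choose (a + b) * a.choose w * b.choose w
    = c.choose a * c.choose b := by
  -- extend the range to `b + 1`
  have hext : ∑ w ∈ Finset.range (min a b + 1),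
        (c + w).choose (a + b) * a.choose w * b.choose w
      = ∑ w ∈ Finset.range (b + 1),
        (c + w).choose (a + b) * a.choose w * b.choose w := by
    apply Finset.sum_subset
    · exact Finset.range_subset_range.2 (by omega)
    · intro w hw hw2
      simp only [Finset.mem_range] at hw hw2
      have : a < w := by omega
      simp [Nat.choose_eq_zero_of_lt this]
  rw [hext]
  -- expand via Vandermonde and swap the sums
  have hexp : ∑ w ∈ Finset.range (b + 1),
        (c + w).choose (a + b) * a.choose w * b.choose w
      = ∑ k ∈ Finset.range (a + b + 1), ∑ w ∈ Finset.range (b + 1),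
          c.choose k * (w.choose (a + b - k) * (a.choose w * b.choose w)) := by
    rw [Finset.sum_comm]
    apply Finset.sum_congr rfl
    intro w _
    rw [vand c w (a + b), Finset.sum_mul, Finset.sum_mul]
    apply Finset.sum_congr rfl
    intro k _
    ring
  rw [hexp, rhs_eq a b c]
  apply Finset.sum_congr rfl
  intro k hk
  have hk' : k ≤ a + b := by simpa [Nat.lt_succ_iff] using hk
  rw [← Finset.mul_sum]
  congr 1
  rcases lt_or_ge k b with hkb | hbk
  · -- inner sum is 0 since a + b - k > a, and `k.choose b = 0`
    rw [Nat.choose_eq_zero_of_lt hkb, Nat.zero_mul]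
    apply Finset.sum_eq_zero
    intro w hw
    rcases lt_or_ge w (a + b - k) with h1 | h2
    · simp [Nat.choose_eq_zero_of_lt h1]
    · have : a < w := by omega
      simp [Nat.choose_eq_zero_of_lt this]
  · rcases lt_or_ge k a with hka | hak
    · -- a + b - k > b : every term has `w.choose (a+b-k) = 0`
      have hb : b < a + b - k := by omega
      have hz : ∀ w ∈ Finset.range (b + 1),
          w.choose (a + b - k) * (a.choose w * b.choose w) = 0 := by
        intro w hw
        have hw' : w ≤ b := by simpa [Nat.lt_succ_iff] using hw
        have : w < a + b - k := by omega
        simp [Nat.choose_eq_zero_of_lt this]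
      rw [Finset.sum_eq_zero hz]
      have : b < a + b - k := hb
      rw [Nat.choose_eq_zero_of_lt this]
      ring
    · -- main case: a ≤ k, b ≤ k
      have hja : a + b - k ≤ a := by omega
      have hjb : a + b - k ≤ b := by omega
      rw [inner_eq a b (a + b - k) hja hjb]
      have h1 : a + b - (a + b - k) = k := by omega
      have h2 : a - (a + b - k) = k - b := by omega
      rw [h1, h2, Nat.choose_symm hbk]
      ring
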